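/- arXiv:math/0107095 — 4 statements merged into one kernel-verified Lean document; each statement's English description precedes it below -/
import Mathlib

section
/- If every tile of the tile set T is irreducible with respect to φ, then no two distinct tilings of a simply connected region R by tiles of T have the same height function. -/
/-- A square of the grid, indexed by its `(x, y)` coordinates. -/
abbrev Square : Type := ℤ × ℤ

/-- Two squares are adjacent if they share an edge. -/
def SqAdj (s t : Square) : Prop :=
  (s.1 = t.1 ∧ (s.2 = t.2 + 1 ∨ s.2 + 1 = t.2)) ∨
  (s.2 = t.2 ∧ (s.1 = t.1 + 1 ∨ s.1 + 1 = t.1))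

/-- A set of squares is connected with respect to edge-adjacency. -/
def ConnOn (S : Set Square) : Prop :=
  ∀ a ∈ S, ∀ b ∈ S, Relation.ReflTransGen (fun x y => x ∈ S ∧ y ∈ S ∧ SqAdj x y) a b

/-- Winding number of a sequence of squares around the square `p`: the signed
number of crossings of the upward vertical ray above (the center of) `p`;
a leftward horizontal move strictly above `p` counts `+1`, so that a
counterclockwise loop around `p` has winding number `+1`. -/
def sqWinding (p : Square) (L : List Square) : ℤ :=
  ((L.zip L.tail).map (fun ab : Square × Square =>
    if ab.1.2 = ab.2.2 ∧ p.2 < ab.1.2 ∧ ab.1.1 = p.1 + 1 ∧ ab.2.1 = p.1 then (1 : ℤ)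
    else if ab.1.2 = ab.2.2 ∧ p.2 < ab.1.2 ∧ ab.1.1 = p.1 ∧ ab.2.1 = p.1 + 1 then (-1 : ℤ)
    else 0)).sum

/-- A closed cycle of squares all lying in `S`. -/
def SqLoopIn (S : Set Square) (L : List Square) : Prop :=
  L ≠ [] ∧ (∀ s ∈ L, s ∈ S) ∧ L.Chain' SqAdj ∧ L.head? = L.getLast?

/-- A set of squares is simply connected if no cycle of squares in it encircles
a square outside of it with nonzero winding number. -/
def SimplyConnectedSq (S : Set Square) : Prop :=
  ∀ p : Square, p ∉ S → ∀ L : List Square, SqLoopIn S L → sqWinding p L = 0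

/-- A region: a finite, nonempty, connected set of squares. -/
def IsRegion (R : Finset Square) : Prop := R.Nonempty ∧ ConnOn ↑R

/-- A ribbon tile of order `n`: a connected set of `n` squares containing
exactly one square of each color `c`, where the square `(x, y)` has color
`(x + y) mod n`. -/
def IsRibbonTile (n : ℕ) (t : Finset Square) : Prop :=
  ConnOn ↑t ∧ t.card = n ∧
  ∀ c : ℤ, 0 ≤ c → c < n → ∃! s, s ∈ t ∧ (s.1 + s.2) % n = c

/-- An order-`n` ribbon tiling of `R`: a partition of `R` into order-`n`
ribbon tiles. -/
def IsRibbonTiling (n : ℕ) (R : Finset Square) (α : Finset (Finset Square)) : Prop :=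
  (∀ t ∈ α, IsRibbonTile n t) ∧ (∀ t ∈ α, t ⊆ R) ∧
  (∀ s ∈ R, ∃! t, t ∈ α ∧ s ∈ t)

/-- Two tilings differ by a local replacement move: one is obtained from the
other by removing a single pair of tiles and adding a different pair of tiles
covering the same squares. -/
def LocalMove (α β : Finset (Finset Square)) : Prop :=
  ∃ t₁ t₂ u₁ u₂ : Finset Square, t₁ ∈ α ∧ t₂ ∈ α ∧ t₁ ≠ t₂ ∧ u₁ ≠ u₂ ∧
    ({t₁, t₂} : Finset (Finset Square)) ≠ {u₁, u₂} ∧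
    t₁ ∪ t₂ = u₁ ∪ u₂ ∧
    β = (α \ {t₁, t₂}) ∪ {u₁, u₂}

/-- The "left of" relation on squares: `s` is directly left (same level,
smaller `x`) or indirectly left (levels differing by one, `x ≤ x'`, `y ≥ y'`)
of `s'`. -/
def sqPrec (s t : Square) : Prop :=
  (s.1 + s.2 = t.1 + t.2 ∧ s.1 < t.1) ∨
  (|s.1 + s.2 - (t.1 + t.2)| = 1 ∧ s.1 ≤ t.1 ∧ t.2 ≤ s.2)

/-- The "left of" relation for (sets of) squares: `t₁ ≺ t₂` if some square of
`t₁` is left of some square of `t₂`.  A single square `s` is treated as the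
singleton `{s}`. -/
def TilePrec (t₁ t₂ : Finset Square) : Prop :=
  ∃ s₁ ∈ t₁, ∃ s₂ ∈ t₂, sqPrec s₁ s₂

/-- The boundary `B_R` of a region: squares not in `R` adjacent to a square
of `R`. -/
def boundarySet (R : Finset Square) : Set Square :=
  {s | s ∉ R ∧ ∃ r ∈ R, SqAdj s r}

/-- The level of a tile: the level `x + y` of its lowest square. -/
def tileLevel (t : Finset Square) : ℤ := WithTop.untopD 0 ((t.image fun s : Square => s.1 + s.2).min)

/-- `IsNthTile α c i t`: `t` is the tile `t_{c,i}(α)`, i.e. the `i`-th tile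
(0-indexed, from left to right with respect to `≺`) of level `c` in the
tiling `α`. -/
def IsNthTile (α : Finset (Finset Square)) (c : ℤ) (i : ℕ) (t : Finset Square) : Prop :=
  t ∈ α ∧ tileLevel t = c ∧
  {t' : Finset Square | t' ∈ α ∧ t' ≠ t ∧ tileLevel t' = c ∧ TilePrec t' t}.ncard = i



/-- A lattice vertex (a corner of grid squares). -/
abbrev LVert : Type := ℤ × ℤ

/-- Two lattice vertices joined by a unit edge. -/
def VAdj (a b : LVert) : Prop :=
  (a.1 = b.1 ∧ (a.2 = b.2 + 1 ∨ a.2 + 1 = b.2)) ∨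
  (a.2 = b.2 ∧ (a.1 = b.1 + 1 ∨ a.1 + 1 = b.1))

/-- The (at most) two squares flanking the lattice edge with endpoints
`a`, `b` (for a unit edge). The square `(x, y)` has corners `(x, y)`,
`(x+1, y)`, `(x, y+1)`, `(x+1, y+1)`. -/
def edgeSquares (a b : LVert) : Set Square :=
  if a.1 = b.1 then {(a.1 - 1, min a.2 b.2), (a.1, min a.2 b.2)}
  else {(min a.1 b.1, a.2 - 1), (min a.1 b.1, a.2)}

/-- `v` is a corner of the square `s`. -/
def IsCornerOf (v : LVert) (s : Square) : Prop :=
  (v.1 = s.1 ∨ v.1 = s.1 + 1) ∧ (v.2 = s.2 ∨ v.2 = s.2 + 1)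

/-- `v` is a vertex of the region `R`. -/
def VertexOfR (R : Finset Square) (v : LVert) : Prop :=
  ∃ s ∈ R, IsCornerOf v s

/-- `v` is a vertex on the boundary of the region `R`. -/
def BoundaryVertexR (R : Finset Square) (v : LVert) : Prop :=
  (∃ s ∈ R, IsCornerOf v s) ∧ (∃ s : Square, s ∉ R ∧ IsCornerOf v s)

/-- The sum of `φ` over the four clockwise-oriented edges of the square `s`
(with the `x`-axis pointing right and the `y`-axis pointing up). -/
def phiSq {G : Type*} [AddCommGroup G] (φ : LVert → LVert → G) (s : Square) : G :=
  φ (s.1, s.2) (s.1, s.2 + 1) + φ (s.1, s.2 + 1) (s.1 + 1, s.2 + 1) +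
    φ (s.1 + 1, s.2 + 1) (s.1 + 1, s.2) + φ (s.1 + 1, s.2) (s.1, s.2)

/-- The edge `(a, b)` is an interior edge of the tile `t`: both flanking
squares belong to `t`. -/
def InteriorEdgeOf (t : Finset Square) (a b : LVert) : Prop :=
  VAdj a b ∧ ∀ s ∈ edgeSquares a b, s ∈ t

/-- The edge `(a, b)` is a boundary edge of the tile `t`. -/
def BoundaryEdgeOf (t : Finset Square) (a b : LVert) : Prop :=
  VAdj a b ∧ (∃ s ∈ edgeSquares a b, s ∈ t) ∧ (∃ s ∈ edgeSquares a b, s ∉ t)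

/-- `v` lies on the boundary of the tile `t`. -/
def OnBoundaryOf (t : Finset Square) (v : LVert) : Prop :=
  ∃ w : LVert, BoundaryEdgeOf t v w

/-- The edge `(a, b)` crosses a tile of the tiling `α` (it lies between two
squares of one tile). -/
def CrossesTile (α : Finset (Finset Square)) (a b : LVert) : Prop :=
  ∃ t ∈ α, InteriorEdgeOf t a b

/-- A tiling of the region `R` by tiles from the tile set `T`. -/
def IsTilingBy (T : Set (Finset Square)) (R : Finset Square)
    (α : Finset (Finset Square)) : Prop :=
  (∀ t ∈ α, t ∈ T) ∧ (∀ t ∈ α, t ⊆ R) ∧ (∀ s ∈ R, ∃! t, t ∈ α ∧ s ∈ t)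

/-- Winding number of a closed sequence of lattice vertices around (the
center of) the square `s`: the signed number of crossings of the upward
vertical ray above `s`; a leftward step strictly above `s` counts `+1`, so a
counterclockwise loop around `s` has winding number `+1`. -/
def vWinding (s : Square) (L : List LVert) : ℤ :=
  ((L.zip L.tail).map (fun ab : LVert × LVert =>
    if ab.1.2 = ab.2.2 ∧ s.2 + 1 ≤ ab.1.2 ∧ ab.1.1 = s.1 + 1 ∧ ab.2.1 = s.1 then (1 : ℤ)
    else if ab.1.2 = ab.2.2 ∧ s.2 + 1 ≤ ab.1.2 ∧ ab.1.1 = s.1 ∧ ab.2.1 = s.1 + 1 then (-1 : ℤ)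
    else 0)).sum

/-- The path `seg` (a maximal list of vertices of the original path lying
inside one tile `t` of `α`) passes the square `s` on the left: its endpoints
`vi`, `vj` lie on the boundary of `t`, all its edges are interior edges of
`t`, and `s` lies inside the closed polygon formed by `seg` together with the
counterclockwise half `q` of the boundary of `t` connecting `vi` to `vj`
(`q'` being the complementary half, so that `q` followed by `q'` is the full
boundary cycle of `t`, traversed counterclockwise). -/
def PassesLeftSeg (α : Finset (Finset Square)) (seg : List LVert) (s : Square) : Prop :=
  ∃ t ∈ α, ∃ vi vj : LVert,
    seg.head? = some vi ∧ seg.getLast? = some vj ∧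
    OnBoundaryOf t vi ∧ OnBoundaryOf t vj ∧
    seg.Chain' (InteriorEdgeOf t) ∧
    ∃ q q' : List LVert,
      q.head? = some vi ∧ q.getLast? = some vj ∧
      q'.head? = some vj ∧ q'.getLast? = some vi ∧
      q.Chain' (BoundaryEdgeOf t) ∧ q'.Chain' (BoundaryEdgeOf t) ∧
      (∀ s' ∈ t, vWinding s' (q ++ q'.tail) = 1) ∧
      vWinding s (seg ++ q.reverse.tail) ≠ 0

/-- The sublist of the indexed path `p` from index `i` to index `j`. -/
def segList (p : ℕ → LVert) (i j : ℕ) : List LVert :=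
  (List.range (j - i + 1)).map fun r => p (i + r)



/-- `E` is (the edge relation of) a spanning tree of the squares of `t`:
a symmetric subrelation of adjacency on `t`, connecting all of `t`, with no
simple cycle. -/
def IsSpanningTree (t : Finset Square) (E : Square → Square → Prop) : Prop :=
  (∀ a b, E a b → a ∈ t ∧ b ∈ t ∧ SqAdj a b) ∧
  (∀ a b, E a b → E b a) ∧
  (∀ a ∈ t, ∀ b ∈ t, Relation.ReflTransGen E a b) ∧
  (∀ (k : ℕ) (f : ℕ → Square), 2 < k → (∀ m < k, E (f m) (f (m + 1))) →
    f k = f 0 → ¬ (∀ m < k, ∀ m' < k, f m = f m' → m = m'))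

/-- The edge `(a, b)` lies between two squares of a tile of `α` that are
adjacent in that tile's spanning tree; across such edges the height function
is unconstrained. -/
def TreeCross (α : Finset (Finset Square)) (Etree : Finset Square → Square → Square → Prop)
    (a b : LVert) : Prop :=
  ∃ t ∈ α, ∃ s ∈ edgeSquares a b, ∃ s' ∈ edgeSquares a b,
    s ≠ s' ∧ s ∈ t ∧ s' ∈ t ∧ Etree t s s'

/-- `h` is the height function of the tiling `α` of `R` (with the given
spanning trees), with respect to `φ` and the reference vertex `v₀`:
`h v₀ = 0` and `h` changes by `φ` along every edge of `R` whose two incident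
squares lie in different tiles or are non-adjacent in their tile's spanning
tree. -/
def IsHeightFunction {G : Type*} [AddCommGroup G] (φ : LVert → LVert → G)
    (R : Finset Square) (α : Finset (Finset Square))
    (Etree : Finset Square → Square → Square → Prop)
    (v₀ : LVert) (h : LVert → G) : Prop :=
  h v₀ = 0 ∧
  ∀ a b : LVert, VAdj a b → VertexOfR R a → VertexOfR R b →
    ¬ TreeCross α Etree a b → h b - h a = φ a b

/-- The tile `t` is irreducible with respect to `φ`: it cannot be partitioned
into two or more admissible polyominoes (nonempty connected pieces `u` with
`φ(u) = 0`). -/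
def IrreducibleTile {G : Type*} [AddCommGroup G] (φ : LVert → LVert → G)
    (t : Finset Square) : Prop :=
  ¬ ∃ P : Finset (Finset Square), 2 ≤ P.card ∧
      (∀ u ∈ P, u.Nonempty ∧ ConnOn ↑u) ∧
      (∀ u ∈ P, u ⊆ t) ∧
      (∀ s ∈ t, ∃! u, u ∈ P ∧ s ∈ u) ∧
      (∀ u ∈ P, ∑ s ∈ u, phiSq φ s = 0)
private lemma sum_eq_sum_of_vanish {G : Type*} [AddCommGroup G] (u v : Finset Square)
    (f : Square → G) (h1 : ∀ s ∈ u, s ∉ v → f s = 0) (h2 : ∀ s ∈ v, s ∉ u → f s = 0) :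
    ∑ s ∈ u, f s = ∑ s ∈ v, f s := by
  classical
  have e1 : ∑ s ∈ u ∩ v, f s = ∑ s ∈ u, f s :=
    Finset.sum_subset Finset.inter_subset_left
      (fun x hx hx' => h1 x hx (fun hv => hx' (Finset.mem_inter.mpr ⟨hx, hv⟩)))
  have e2 : ∑ s ∈ u ∩ v, f s = ∑ s ∈ v, f s :=
    Finset.sum_subset Finset.inter_subset_right
      (fun x hx hx' => h2 x hx (fun hv => hx' (Finset.mem_inter.mpr ⟨hv, hx⟩)))
  rw [← e1, e2]

private lemma green {G : Type*} [AddCommGroup G] (u : Finset Square) (D : LVert → LVert → G)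
    (hanti : ∀ a b, D a b = - D b a)
    (hL : ∀ s ∈ u, ((s.1 - 1, s.2) : Square) ∉ u → D (s.1, s.2) (s.1, s.2 + 1) = 0)
    (hR : ∀ s ∈ u, ((s.1 + 1, s.2) : Square) ∉ u → D (s.1 + 1, s.2 + 1) (s.1 + 1, s.2) = 0)
    (hU : ∀ s ∈ u, ((s.1, s.2 + 1) : Square) ∉ u → D (s.1, s.2 + 1) (s.1 + 1, s.2 + 1) = 0)
    (hB : ∀ s ∈ u, ((s.1, s.2 - 1) : Square) ∉ u → D (s.1 + 1, s.2) (s.1, s.2) = 0) :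
    ∑ s ∈ u, phiSq D s = 0 := by
  classical
  set A : Square → G := fun s => D (s.1, s.2) (s.1, s.2 + 1) with hA
  set B : Square → G := fun s => D (s.1, s.2 + 1) (s.1 + 1, s.2 + 1) with hBdef
  have key : ∀ s : Square, phiSq D s = A s + B s + (- A (s.1 + 1, s.2)) + (- B (s.1, s.2 - 1)) := by
    intro s
    have h3 : D (s.1 + 1, s.2 + 1) (s.1 + 1, s.2) = - A (s.1 + 1, s.2) := by
      rw [hA]; dsimp only; rw [hanti]
    have h4 : D (s.1 + 1, s.2) (s.1, s.2) = - B (s.1, s.2 - 1) := by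
      rw [hBdef]; dsimp only
      have e : ((s.1 : ℤ), s.2 - 1 + 1) = ((s.1 : ℤ), s.2) := by norm_num
      have e' : ((s.1 + 1 : ℤ), s.2 - 1 + 1) = ((s.1 + 1 : ℤ), s.2) := by norm_num
      rw [e, e', hanti]
    rw [phiSq, h3, h4]
  rw [Finset.sum_congr rfl (fun s _ => key s)]
  have inj1 : ∀ x ∈ u, ∀ y ∈ u, ((x.1 + 1 : ℤ), x.2) = ((y.1 + 1 : ℤ), y.2) → x = y := by
    intro x _ y _ h
    have h1 := congrArg Prod.fst h; have h2 := congrArg Prod.snd h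
    dsimp at h1 h2
    exact Prod.ext (by omega) (by omega)
  have inj2 : ∀ x ∈ u, ∀ y ∈ u, ((x.1 : ℤ), x.2 - 1) = ((y.1 : ℤ), y.2 - 1) → x = y := by
    intro x _ y _ h
    have h1 := congrArg Prod.fst h; have h2 := congrArg Prod.snd h
    dsimp at h1 h2
    exact Prod.ext (by omega) (by omega)
  have s1 : ∑ s ∈ u, A (s.1 + 1, s.2) = ∑ s ∈ u.image (fun s : Square => ((s.1 + 1 : ℤ), s.2)), A s :=
    (Finset.sum_image inj1).symm
  have s2 : ∑ s ∈ u, B (s.1, s.2 - 1) = ∑ s ∈ u.image (fun s : Square => ((s.1 : ℤ), s.2 - 1)), B s :=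
    (Finset.sum_image inj2).symm
  have t1 : ∑ s ∈ u.image (fun s : Square => ((s.1 + 1 : ℤ), s.2)), A s = ∑ s ∈ u, A s := by
    apply sum_eq_sum_of_vanish
    · intro s hs hsu
      obtain ⟨p, hp, rfl⟩ := Finset.mem_image.mp hs
      have := hR p hp (by simpa using hsu)
      rw [hA]; dsimp only; rw [hanti]; rw [this]; simp
    · intro s hs hsi
      apply hL s hs
      intro hmem
      apply hsi
      refine Finset.mem_image.mpr ⟨(s.1 - 1, s.2), hmem, ?_⟩
      exact Prod.ext (by dsimp; ring) rfl
  have t2 : ∑ s ∈ u.image (fun s : Square => ((s.1 : ℤ), s.2 - 1)), B s = ∑ s ∈ u, B s := by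
    apply sum_eq_sum_of_vanish
    · intro s hs hsu
      obtain ⟨p, hp, rfl⟩ := Finset.mem_image.mp hs
      have := hB p hp (by simpa using hsu)
      rw [hBdef]; dsimp only
      have e : ((p.1 : ℤ), p.2 - 1 + 1) = ((p.1 : ℤ), p.2) := by norm_num
      have e' : ((p.1 + 1 : ℤ), p.2 - 1 + 1) = ((p.1 + 1 : ℤ), p.2) := by norm_num
      rw [e, e', hanti, this]; simp
    · intro s hs hsi
      apply hU s hs
      intro hmem
      apply hsi
      refine Finset.mem_image.mpr ⟨(s.1, s.2 + 1), hmem, ?_⟩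
      exact Prod.ext rfl (by dsimp; ring)
  simp only [Finset.sum_add_distrib, Finset.sum_neg_distrib]
  rw [s1, s2, t1, t2]
  abel
private lemma sqadj_symm' : ∀ x y : Square, SqAdj x y → SqAdj y x := by
  intro x y h
  unfold SqAdj at *
  omega

private lemma tile_sub {G : Type*} [AddCommGroup G]
    (T : Set (Finset Square)) (hT : ∀ t ∈ T, t.Nonempty)
    (φ : LVert → LVert → G) (hanti : ∀ a b : LVert, φ a b = - φ b a)
    (hirr : ∀ t ∈ T, IrreducibleTile φ t)
    (R : Finset Square)
    (α β : Finset (Finset Square)) (hα : IsTilingBy T R α) (hβ : IsTilingBy T R β)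
    (Eα Eβ : Finset Square → Square → Square → Prop)
    (v₀ : LVert) (h₁ h₂ : LVert → G)
    (hh₁ : IsHeightFunction φ R α Eα v₀ h₁) (hh₂ : IsHeightFunction φ R β Eβ v₀ h₂)
    (hsame : ∀ v : LVert, VertexOfR R v → h₁ v = h₂ v) :
    ∀ t ∈ α, ∃ t' ∈ β, t ⊆ t' := by
  classical
  intro t ht
  have htT : t ∈ T := hα.1 t ht
  have htR : t ⊆ R := hα.2.1 t ht
  obtain ⟨s₀, hs₀⟩ := hT t htT
  obtain ⟨tβ, ⟨htβ, hs₀tβ⟩, _⟩ := hβ.2.2 s₀ (htR hs₀)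
  refine ⟨tβ, htβ, ?_⟩
  set Rel : Square → Square → Prop :=
    fun x y => x ∈ t ∧ y ∈ t ∧ SqAdj x y ∧ ∃ b ∈ β, x ∈ b ∧ y ∈ b with hRel
  have relsymm : Symmetric Rel := by
    rintro x y ⟨hx, hy, hadj, b, hb, hxb, hyb⟩
    exact ⟨hy, hx, sqadj_symm' x y hadj, b, hb, hyb, hxb⟩
  have rtgsymm : ∀ x y, Relation.ReflTransGen Rel x y → Relation.ReflTransGen Rel y x :=
    fun x y h => by
      haveI : Std.Symm Rel := ⟨fun a b hab => relsymm hab⟩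
      exact (Relation.ReflTransGen.symmetric (r := Rel)).symm x y h
  set piece : Square → Finset Square :=
    fun s => t.filter (fun x => Relation.ReflTransGen Rel s x) with hpiece
  have mem_piece : ∀ s x : Square, x ∈ piece s ↔ x ∈ t ∧ Relation.ReflTransGen Rel s x := by
    intro s x; simp [hpiece]
  have self_mem : ∀ s ∈ t, s ∈ piece s :=
    fun s hs => (mem_piece s s).mpr ⟨hs, Relation.ReflTransGen.refl⟩
  have piece_congr : ∀ s x : Square, Relation.ReflTransGen Rel s x → piece s = piece x := by
    intro s x hsx
    ext y
    rw [mem_piece, mem_piece]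
    constructor
    · rintro ⟨hy, h⟩; exact ⟨hy, Relation.ReflTransGen.trans (rtgsymm _ _ hsx) h⟩
    · rintro ⟨hy, h⟩; exact ⟨hy, Relation.ReflTransGen.trans hsx h⟩
  have beta_const : ∀ (b : Finset Square), b ∈ β → ∀ s x, s ∈ b →
      Relation.ReflTransGen Rel s x → x ∈ b := by
    intro b hb s x hsb h
    induction h with
    | refl => exact hsb
    | tail h' hstep ih =>
      obtain ⟨hm, hy, hadj, b', hb', hmb', hyb'⟩ := hstep
      obtain ⟨w, hw, hwu⟩ := hβ.2.2 _ (htR hm)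
      have e1 := hwu b ⟨hb, ih⟩
      have e2 := hwu b' ⟨hb', hmb'⟩
      rw [e2, ← e1] at hyb'
      exact hyb'
  -- master vanishing lemma for boundary edges of a piece
  have master : ∀ sb : Square, ∀ s ∈ piece sb, ∀ nb : Square, SqAdj s nb → nb ∉ piece sb →
      ∀ a b : LVert, VAdj a b → IsCornerOf a s → IsCornerOf b s →
      (∀ x : Square, x ∈ edgeSquares a b ↔ (x = s ∨ x = nb)) →
      φ a b - (h₁ b - h₁ a) = 0 := by
    intro sb s hs nb hadj hnb a b hvadj hca hcb hiff
    obtain ⟨hst, hrtg⟩ := (mem_piece sb s).mp hs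
    have hsR : s ∈ R := htR hst
    have hva : VertexOfR R a := ⟨s, hsR, hca⟩
    have hvb : VertexOfR R b := ⟨s, hsR, hcb⟩
    have hcase : nb ∉ t ∨ ¬ ∃ b' ∈ β, s ∈ b' ∧ nb ∈ b' := by
      by_contra hc
      push_neg at hc
      exact hnb ((mem_piece sb nb).mpr ⟨hc.1,
        Relation.ReflTransGen.tail hrtg ⟨hst, hc.1, hadj, hc.2⟩⟩)
    rcases hcase with hnt | hnc
    · -- edge between different α-tiles (or exterior): use h₁
      have hnx : ¬ TreeCross α Eα a b := by
        rintro ⟨t', ht', x, hx, y, hy, hne, hxt, hyt, hE⟩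
        have hx' := (hiff x).mp hx
        have hy' := (hiff y).mp hy
        have hboth : s ∈ t' ∧ nb ∈ t' := by
          rcases hx' with rfl | rfl <;> rcases hy' with rfl | rfl
          · exact absurd rfl hne
          · exact ⟨hxt, hyt⟩
          · exact ⟨hyt, hxt⟩
          · exact absurd rfl hne
        obtain ⟨w, hw, hwu⟩ := hα.2.2 s hsR
        have e1 := hwu t' ⟨ht', hboth.1⟩
        have e2 := hwu t ⟨ht, hst⟩
        have hnb2 := hboth.2
        rw [e1, ← e2] at hnb2
        exact hnt hnb2
      rw [hh₁.2 a b hvadj hva hvb hnx]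
      exact sub_self _
    · -- edge between different β-tiles: use h₂ and hsame
      have hnx : ¬ TreeCross β Eβ a b := by
        rintro ⟨t', ht', x, hx, y, hy, hne, hxt, hyt, hE⟩
        have hx' := (hiff x).mp hx
        have hy' := (hiff y).mp hy
        have hboth : s ∈ t' ∧ nb ∈ t' := by
          rcases hx' with rfl | rfl <;> rcases hy' with rfl | rfl
          · exact absurd rfl hne
          · exact ⟨hxt, hyt⟩
          · exact ⟨hyt, hxt⟩
          · exact absurd rfl hne
        exact hnc ⟨t', ht', hboth.1, hboth.2⟩
      rw [hsame a hva, hsame b hvb, hh₂.2 a b hvadj hva hvb hnx]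
      exact sub_self _
  -- now the main containment
  by_contra hns
  obtain ⟨s₁, hs₁t, hs₁⟩ := Finset.not_subset.mp hns
  have hnrtg : ¬ Relation.ReflTransGen Rel s₀ s₁ :=
    fun h => hs₁ (beta_const tβ htβ s₀ s₁ hs₀tβ h)
  set P : Finset (Finset Square) := t.image piece with hP
  apply hirr t htT
  refine ⟨P, ?_, ?_, ?_, ?_, ?_⟩
  · -- 2 ≤ P.card
    have hne : piece s₀ ≠ piece s₁ := by
      intro h
      exact hnrtg (((mem_piece s₀ s₁).mp (h ▸ self_mem s₁ hs₁t)).2)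
    exact Finset.one_lt_card_iff.mpr
      ⟨piece s₀, piece s₁, Finset.mem_image_of_mem _ hs₀, Finset.mem_image_of_mem _ hs₁t, hne⟩
  · -- nonempty and connected
    intro u hu
    obtain ⟨s, hs, rfl⟩ := Finset.mem_image.mp hu
    refine ⟨⟨s, self_mem s hs⟩, ?_⟩
    have strengthen : ∀ x y, Relation.ReflTransGen Rel x y →
        Relation.ReflTransGen Rel s x →
        Relation.ReflTransGen
          (fun p q => p ∈ (↑(piece s) : Set Square) ∧ q ∈ (↑(piece s) : Set Square) ∧ SqAdj p q)
          x y := by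
      intro x y hxy hsx
      induction hxy with
      | refl => exact Relation.ReflTransGen.refl
      | @tail m y h' hstep ih =>
        have hsm : Relation.ReflTransGen Rel s m := Relation.ReflTransGen.trans hsx h'
        have hsy : Relation.ReflTransGen Rel s y := Relation.ReflTransGen.tail hsm hstep
        refine Relation.ReflTransGen.tail ih ⟨?_, ?_, hstep.2.2.1⟩
        · exact Finset.mem_coe.mpr ((mem_piece s m).mpr ⟨hstep.1, hsm⟩)
        · exact Finset.mem_coe.mpr ((mem_piece s y).mpr ⟨hstep.2.1, hsy⟩)
    intro x hx y hy
    have hx' := (mem_piece s x).mp (Finset.mem_coe.mp hx)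
    have hy' := (mem_piece s y).mp (Finset.mem_coe.mp hy)
    exact strengthen x y (Relation.ReflTransGen.trans (rtgsymm _ _ hx'.2) hy'.2) hx'.2
  · -- subsets
    intro u hu
    obtain ⟨s, hs, rfl⟩ := Finset.mem_image.mp hu
    exact Finset.filter_subset _ _
  · -- partition
    intro s hs
    refine ⟨piece s, ⟨Finset.mem_image_of_mem _ hs, self_mem s hs⟩, ?_⟩
    rintro u ⟨hu, hsu⟩
    obtain ⟨s', hs', rfl⟩ := Finset.mem_image.mp hu
    exact piece_congr s' s ((mem_piece s' s).mp hsu).2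
  · -- phi-sum zero on each piece
    intro u hu
    obtain ⟨sb, hsb, rfl⟩ := Finset.mem_image.mp hu
    set D : LVert → LVert → G := fun a b => φ a b - (h₁ b - h₁ a) with hD
    have hsum : ∑ s ∈ piece sb, phiSq φ s = ∑ s ∈ piece sb, phiSq D s := by
      refine Finset.sum_congr rfl (fun s _ => ?_)
      simp only [phiSq, hD]
      abel
    rw [hsum]
    apply green (piece sb) D
    · intro a b; simp only [hD]; rw [hanti a b]; abel
    · -- left
      intro s hs hn
      apply master sb s hs (s.1 - 1, s.2) (by unfold SqAdj; dsimp; omega) hn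
      · unfold VAdj; dsimp; omega
      · exact ⟨Or.inl rfl, Or.inl rfl⟩
      · exact ⟨Or.inl rfl, Or.inr rfl⟩
      · intro x
        unfold edgeSquares
        rw [if_pos rfl]
        dsimp only
        have : min s.2 (s.2 + 1) = s.2 := min_eq_left (by omega)
        rw [this]
        simp only [Set.mem_insert_iff, Set.mem_singleton_iff, Prod.ext_iff]
        omega
    · -- right
      intro s hs hn
      apply master sb s hs (s.1 + 1, s.2) (by unfold SqAdj; dsimp; omega) hn
      · unfold VAdj; dsimp; omega
      · exact ⟨Or.inr rfl, Or.inr rfl⟩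
      · exact ⟨Or.inr rfl, Or.inl rfl⟩
      · intro x
        unfold edgeSquares
        rw [if_pos rfl]
        dsimp only
        have : min (s.2 + 1) s.2 = s.2 := min_eq_right (by omega)
        rw [this]
        simp only [Set.mem_insert_iff, Set.mem_singleton_iff, Prod.ext_iff]
        omega
    · -- up
      intro s hs hn
      apply master sb s hs (s.1, s.2 + 1) (by unfold SqAdj; dsimp; omega) hn
      · unfold VAdj; dsimp; omega
      · exact ⟨Or.inl rfl, Or.inr rfl⟩
      · exact ⟨Or.inr rfl, Or.inr rfl⟩
      · intro x
        unfold edgeSquares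
        rw [if_neg (by dsimp; omega)]
        dsimp only
        have : min s.1 (s.1 + 1) = s.1 := min_eq_left (by omega)
        rw [this]
        simp only [Set.mem_insert_iff, Set.mem_singleton_iff, Prod.ext_iff]
        omega
    · -- down
      intro s hs hn
      apply master sb s hs (s.1, s.2 - 1) (by unfold SqAdj; dsimp; omega) hn
      · unfold VAdj; dsimp; omega
      · exact ⟨Or.inr rfl, Or.inl rfl⟩
      · exact ⟨Or.inl rfl, Or.inl rfl⟩
      · intro x
        unfold edgeSquares
        rw [if_neg (by dsimp; omega)]
        dsimp only
        have : min (s.1 + 1) s.1 = s.1 := min_eq_right (by omega)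
        rw [this]
        simp only [Set.mem_insert_iff, Set.mem_singleton_iff, Prod.ext_iff]
        omega

/-- If every tile of the tile set `T` is irreducible with
respect to `φ`, then no two distinct tilings of a simply connected region `R`
by tiles of `T` have the same height function. -/
theorem irreducible_tiles_height_determines_tiling
    {G : Type*} [AddCommGroup G]
    (T : Set (Finset Square))
    (hT : ∀ t ∈ T, t.Nonempty ∧ ConnOn ↑t ∧ SimplyConnectedSq ↑t)
    (φ : LVert → LVert → G)
    (hanti : ∀ a b : LVert, φ a b = - φ b a)
    (hrel : ∀ t ∈ T, ∑ s ∈ t, phiSq φ s = 0)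
    (hirr : ∀ t ∈ T, IrreducibleTile φ t)
    (R : Finset Square) (hreg : IsRegion R) (hsc : SimplyConnectedSq ↑R)
    (v₀ : LVert) (hv₀ : BoundaryVertexR R v₀)
    (α β : Finset (Finset Square))
    (hα : IsTilingBy T R α) (hβ : IsTilingBy T R β)
    (Eα Eβ : Finset Square → Square → Square → Prop)
    (hEα : ∀ t ∈ α, IsSpanningTree t (Eα t))
    (hEβ : ∀ t ∈ β, IsSpanningTree t (Eβ t))
    (h₁ h₂ : LVert → G)
    (hh₁ : IsHeightFunction φ R α Eα v₀ h₁)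
    (hh₂ : IsHeightFunction φ R β Eβ v₀ h₂)
    (hsame : ∀ v : LVert, VertexOfR R v → h₁ v = h₂ v) :
    α = β := by
  have hT' : ∀ t ∈ T, t.Nonempty := fun t ht => (hT t ht).1
  have H1 := tile_sub T hT' φ hanti hirr R α β hα hβ Eα Eβ v₀ h₁ h₂ hh₁ hh₂ hsame
  have H2 := tile_sub T hT' φ hanti hirr R β α hβ hα Eβ Eα v₀ h₂ h₁ hh₂ hh₁
    (fun v hv => (hsame v hv).symm)
  have key : ∀ (γ δ : Finset (Finset Square)), IsTilingBy T R γ → IsTilingBy T R δ →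
      (∀ t ∈ γ, ∃ t' ∈ δ, t ⊆ t') → (∀ t ∈ δ, ∃ t' ∈ γ, t ⊆ t') → γ ⊆ δ := by
    intro γ δ hγ hδ Hγδ Hδγ t ht
    obtain ⟨t', ht', hsub⟩ := Hγδ t ht
    obtain ⟨t'', ht'', hsub'⟩ := Hδγ t' ht'
    obtain ⟨s, hs⟩ := hT' t (hγ.1 t ht)
    obtain ⟨w, hw, hwu⟩ := hγ.2.2 s (hγ.2.1 t ht hs)
    have e1 := hwu t ⟨ht, hs⟩
    have e2 := hwu t'' ⟨ht'', hsub' (hsub hs)⟩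
    have e3 : t = t'' := e1.trans e2.symm
    rw [← e3] at hsub'
    have e4 : t = t' := Finset.Subset.antisymm hsub hsub'
    rw [e4]
    exact ht'
  exact Finset.Subset.antisymm (key α β hα hβ H1 H2) (key β α hβ hα H2 H1)
end

section
/- Let α and β be two tilings of a simply connected region R by tiles of T having the same height function h. Then for every tile t₁ of α and every tile t₂ of β, each connected component u of t₁ ∩ t₂ satisfies φ(u) = 0. -/
section AuxCHCA

lemma auxES_left (x y : ℤ) : edgeSquares (x,y) (x,y+1) = {((x-1,y) : Square), (x,y)} := by
  simp [edgeSquares, min_eq_left (by omega : (y:ℤ) ≤ y+1)]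

lemma auxES_top (x y : ℤ) : edgeSquares (x,y+1) (x+1,y+1) = {((x,y) : Square), (x,y+1)} := by
  rw [edgeSquares, if_neg (by simp)]
  simp [min_eq_left (by omega : (x:ℤ) ≤ x+1)]

lemma auxES_right (x y : ℤ) : edgeSquares (x+1,y+1) (x+1,y) = {((x,y) : Square), (x+1,y)} := by
  rw [edgeSquares, if_pos rfl]
  simp [min_eq_right (by omega : (y:ℤ) ≤ y+1)]

lemma auxES_bot (x y : ℤ) : edgeSquares (x+1,y) (x,y) = {((x,y-1) : Square), (x,y)} := by
  rw [edgeSquares, if_neg (by simp)]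
  simp [min_eq_right (by omega : (x:ℤ) ≤ x+1)]

lemma auxES_top' (x y : ℤ) : edgeSquares (x+1,y+1) (x,y+1) = {((x,y) : Square), (x,y+1)} := by
  rw [edgeSquares, if_neg (by simp)]
  simp [min_eq_right (by omega : (x:ℤ) ≤ x+1)]

lemma auxES_right' (x y : ℤ) : edgeSquares (x+1,y) (x+1,y+1) = {((x,y) : Square), (x+1,y)} := by
  rw [edgeSquares, if_pos rfl]
  simp [min_eq_left (by omega : (y:ℤ) ≤ y+1)]

lemma auxSqAdj_symm {p q : Square} (h : SqAdj p q) : SqAdj q p := by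
  unfold SqAdj at *; omega

open Classical in
/-- The modified edge weight: `φ` minus the coboundary of `h`, truncated to
edges interior to `u`. -/
noncomputable def dpr {G : Type*} [AddCommGroup G] (φ : LVert → LVert → G)
    (h : LVert → G) (u : Finset Square) (a b : LVert) : G :=
  if ∀ s ∈ edgeSquares a b, s ∈ u then φ a b - (h b - h a) else 0

lemma dpr_anti {G : Type*} [AddCommGroup G] (φ : LVert → LVert → G)
    (hanti : ∀ a b : LVert, φ a b = - φ b a)
    (h : LVert → G) (u : Finset Square) (a b : LVert)
    (hE : edgeSquares a b = edgeSquares b a) :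
    dpr φ h u a b = - dpr φ h u b a := by
  classical
  unfold dpr
  rw [hE]
  by_cases hc : ∀ s ∈ edgeSquares b a, s ∈ u
  · rw [if_pos hc, if_pos hc, hanti a b]; abel
  · rw [if_neg hc, if_neg hc, neg_zero]

end AuxCHCA

/-- Let `α` and `β` be two tilings of a simply connected
region `R` by tiles of `T` having the same height function `h`.  Then for
every tile `t₁` of `α` and every tile `t₂` of `β`, each connected component
`u` of `t₁ ∩ t₂` satisfies `φ(u) = 0`. -/
theorem common_height_components_admissible
    {G : Type*} [AddCommGroup G]
    (T : Set (Finset Square))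
    (hT : ∀ t ∈ T, t.Nonempty ∧ ConnOn ↑t ∧ SimplyConnectedSq ↑t)
    (φ : LVert → LVert → G)
    (hanti : ∀ a b : LVert, φ a b = - φ b a)
    (hrel : ∀ t ∈ T, ∑ s ∈ t, phiSq φ s = 0)
    (R : Finset Square) (hreg : IsRegion R) (hsc : SimplyConnectedSq ↑R)
    (v₀ : LVert) (hv₀ : BoundaryVertexR R v₀)
    (α β : Finset (Finset Square))
    (hα : IsTilingBy T R α) (hβ : IsTilingBy T R β)
    (Eα Eβ : Finset Square → Square → Square → Prop)
    (hEα : ∀ t ∈ α, IsSpanningTree t (Eα t))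
    (hEβ : ∀ t ∈ β, IsSpanningTree t (Eβ t))
    (h : LVert → G)
    (hhα : IsHeightFunction φ R α Eα v₀ h)
    (hhβ : IsHeightFunction φ R β Eβ v₀ h)
    (t₁ : Finset Square) (ht₁ : t₁ ∈ α)
    (t₂ : Finset Square) (ht₂ : t₂ ∈ β)
    (u : Finset Square) (hu0 : u.Nonempty)
    (husub : u ⊆ t₁ ∩ t₂) (huconn : ConnOn ↑u)
    (humax : ∀ s ∈ t₁ ∩ t₂, s ∉ u → ¬ ∃ s' ∈ u, SqAdj s s') :
    ∑ s ∈ u, phiSq φ s = 0 := by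
  classical
  obtain ⟨hTα, hRα, hUα⟩ := hα
  obtain ⟨hTβ, hRβ, hUβ⟩ := hβ
  obtain ⟨-, hhαe⟩ := hhα
  obtain ⟨-, hhβe⟩ := hhβ
  -- squares of u lie in t₁, t₂ and R
  have hut1 : ∀ ⦃s⦄, s ∈ u → s ∈ t₁ := fun s hs => (Finset.mem_inter.mp (husub hs)).1
  have hut2 : ∀ ⦃s⦄, s ∈ u → s ∈ t₂ := fun s hs => (Finset.mem_inter.mp (husub hs)).2
  have huR : ∀ ⦃s⦄, s ∈ u → s ∈ R := fun s hs => hRα t₁ ht₁ (hut1 hs)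
  -- Key: on a boundary edge of u, φ agrees with the coboundary of h
  have key : ∀ a b : LVert, VAdj a b → ∀ p q : Square,
      edgeSquares a b = {p, q} → p ≠ q → SqAdj p q →
      IsCornerOf a p → IsCornerOf b p → p ∈ u → q ∉ u →
      φ a b - (h b - h a) = 0 := by
    intro a b hadj p q hE hpq hsq hca hcb hpu hqu
    have hpR : p ∈ R := huR hpu
    have hVa : VertexOfR R a := ⟨p, hpR, hca⟩
    have hVb : VertexOfR R b := ⟨p, hpR, hcb⟩
    -- a TreeCross (for either tiling) would put p and q in the same tile
    have hcross : ∀ (γ : Finset (Finset Square)) Eγ, TreeCross γ Eγ a b →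
        ∃ t ∈ γ, p ∈ t ∧ q ∈ t := by
      rintro γ Eγ ⟨t, htγ, s, hsE, s', hs'E, hss', hst, hs't, -⟩
      rw [hE] at hsE hs'E
      simp only [Set.mem_insert_iff, Set.mem_singleton_iff] at hsE hs'E
      rcases hsE with rfl | rfl <;> rcases hs'E with rfl | rfl
      · exact absurd rfl hss'
      · exact ⟨t, htγ, hst, hs't⟩
      · exact ⟨t, htγ, hs't, hst⟩
      · exact absurd rfl hss'
    have huniqα : ∀ t ∈ α, p ∈ t → t = t₁ := by
      intro t ht hpt
      obtain ⟨t0, -, hun⟩ := hUα p hpR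
      rw [hun t ⟨ht, hpt⟩, ← hun t₁ ⟨ht₁, hut1 hpu⟩]
    have huniqβ : ∀ t ∈ β, p ∈ t → t = t₂ := by
      intro t ht hpt
      obtain ⟨t0, -, hun⟩ := hUβ p (hRβ t₂ ht₂ (hut2 hpu))
      rw [hun t ⟨ht, hpt⟩, ← hun t₂ ⟨ht₂, hut2 hpu⟩]
    have hdone : φ a b = h b - h a := by
      by_cases hqt1 : q ∈ t₁
      · by_cases hqt2 : q ∈ t₂
        · exact absurd (humax q (Finset.mem_inter.mpr ⟨hqt1, hqt2⟩) hqu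
            ⟨p, hpu, auxSqAdj_symm hsq⟩) (by simp)
        · -- q ∉ t₂ : no TreeCross for β
          refine (hhβe a b hadj hVa hVb ?_).symm
          intro hTC
          obtain ⟨t, htβ, hpt, hqt⟩ := hcross β Eβ hTC
          exact hqt2 (huniqβ t htβ hpt ▸ hqt)
      · -- q ∉ t₁ : no TreeCross for α
        refine (hhαe a b hadj hVa hVb ?_).symm
        intro hTC
        obtain ⟨t, htα, hpt, hqt⟩ := hcross α Eα hTC
        exact hqt1 (huniqα t htα hpt ▸ hqt)
    rw [hdone]; abel
  -- master lemma: on the four edges of a square of u, dpr agrees with φ minus coboundary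
  have master : ∀ (s : Square), s ∈ u → ∀ a b : LVert, VAdj a b → ∀ p : Square,
      edgeSquares a b = {s, p} → s ≠ p → SqAdj s p → IsCornerOf a s → IsCornerOf b s →
      dpr φ h u a b = φ a b - (h b - h a) := by
    intro s hs a b hadj p hE hne hsq hca hcb
    by_cases hc : ∀ q ∈ edgeSquares a b, q ∈ u
    · unfold dpr; rw [if_pos hc]
    · have hpu : p ∉ u := by
        intro hpu
        apply hc
        intro q hq
        rw [hE] at hq
        simp only [Set.mem_insert_iff, Set.mem_singleton_iff] at hq
        rcases hq with rfl | rfl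
        exacts [hs, hpu]
      have h0 := key a b hadj s p hE hne hsq hca hcb hs hpu
      unfold dpr
      rw [if_neg hc, h0]
  -- step 1 : rewrite the sum using dpr
  have step1 : ∀ s ∈ u, phiSq φ s =
      dpr φ h u (s.1, s.2) (s.1, s.2+1)
      + dpr φ h u (s.1, s.2+1) (s.1+1, s.2+1)
      + dpr φ h u (s.1+1, s.2+1) (s.1+1, s.2)
      + dpr φ h u (s.1+1, s.2) (s.1, s.2) := by
    rintro ⟨x, y⟩ hs
    have h1 := master (x,y) hs (x,y) (x,y+1)
      (by unfold VAdj; simp) (x-1,y)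
      (by rw [auxES_left, Set.pair_comm])
      (by intro hh; rw [Prod.ext_iff] at hh; omega)
      (by unfold SqAdj; simp)
      (by unfold IsCornerOf; simp)
      (by unfold IsCornerOf; simp)
    have h2 := master (x,y) hs (x,y+1) (x+1,y+1)
      (by unfold VAdj; simp) (x,y+1)
      (auxES_top x y)
      (by intro hh; rw [Prod.ext_iff] at hh; omega)
      (by unfold SqAdj; simp)
      (by unfold IsCornerOf; simp)
      (by unfold IsCornerOf; simp)
    have h3 := master (x,y) hs (x+1,y+1) (x+1,y)
      (by unfold VAdj; simp) (x+1,y)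
      (auxES_right x y)
      (by intro hh; rw [Prod.ext_iff] at hh; omega)
      (by unfold SqAdj; simp)
      (by unfold IsCornerOf; simp)
      (by unfold IsCornerOf; simp)
    have h4 := master (x,y) hs (x+1,y) (x,y)
      (by unfold VAdj; simp) (x,y-1)
      (by rw [auxES_bot, Set.pair_comm])
      (by intro hh; rw [Prod.ext_iff] at hh; omega)
      (by unfold SqAdj; simp)
      (by unfold IsCornerOf; simp)
      (by unfold IsCornerOf; simp)
    simp only [phiSq]
    rw [h1, h2, h3, h4]
    abel
  rw [Finset.sum_congr rfl step1]
  -- step 2 : the combinatorial cancellation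
  set L : Square → G := fun s => dpr φ h u (s.1, s.2) (s.1, s.2+1) with hL
  set B : Square → G := fun s => dpr φ h u (s.1+1, s.2) (s.1, s.2) with hB
  have htop : ∀ s : Square, dpr φ h u (s.1, s.2+1) (s.1+1, s.2+1) = - B (s.1, s.2+1) := by
    rintro ⟨x, y⟩
    simp only [hB]
    rw [dpr_anti φ hanti h u (x,y+1) (x+1,y+1) (by rw [auxES_top, auxES_top'])]
  have hright : ∀ s : Square, dpr φ h u (s.1+1, s.2+1) (s.1+1, s.2) = - L (s.1+1, s.2) := by
    rintro ⟨x, y⟩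
    simp only [hL]
    rw [dpr_anti φ hanti h u (x+1,y+1) (x+1,y) (by rw [auxES_right, auxES_right'])]
  have hLsupp : ∀ s : Square, L s ≠ 0 → (s.1-1, s.2) ∈ u ∧ s ∈ u := by
    rintro ⟨x, y⟩ hne
    simp only [hL, dpr] at hne
    by_cases hc : ∀ q ∈ edgeSquares ((x,y) : LVert) (x,y+1), q ∈ u
    · rw [auxES_left] at hc
      exact ⟨hc _ (by simp), hc _ (by simp)⟩
    · rw [if_neg hc] at hne; exact absurd rfl hne
  have hBsupp : ∀ s : Square, B s ≠ 0 → (s.1, s.2-1) ∈ u ∧ s ∈ u := by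
    rintro ⟨x, y⟩ hne
    simp only [hB, dpr] at hne
    by_cases hc : ∀ q ∈ edgeSquares ((x+1,y) : LVert) (x,y), q ∈ u
    · rw [auxES_bot] at hc
      exact ⟨hc _ (by simp), hc _ (by simp)⟩
    · rw [if_neg hc] at hne; exact absurd rfl hne
  have claimL : ∑ s ∈ u, L (s.1+1, s.2) = ∑ s ∈ u, L s := by
    rw [← Finset.sum_filter_of_ne (p := fun s : Square => (s.1+1, s.2) ∈ u)
        (fun s _ hne => ((hLsupp _ hne).2 : ((s.1+1:ℤ), s.2) ∈ u)),
      ← Finset.sum_filter_of_ne (p := fun s : Square => (s.1-1, s.2) ∈ u)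
        (f := L) (fun s _ hne => by
          have := (hLsupp _ hne).1; exact this)]
    refine Finset.sum_nbij' (fun s => ((s.1+1 : ℤ), s.2)) (fun s => ((s.1-1 : ℤ), s.2))
      ?_ ?_ ?_ ?_ ?_
    · intro s hs
      rw [Finset.mem_filter] at hs ⊢
      refine ⟨hs.2, ?_⟩
      simpa using hs.1
    · intro s hs
      rw [Finset.mem_filter] at hs ⊢
      refine ⟨hs.2, ?_⟩
      simpa using hs.1
    · intro s _; simp
    · intro s _; simp
    · intro s _; rfl
  have claimB : ∑ s ∈ u, B (s.1, s.2+1) = ∑ s ∈ u, B s := by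
    rw [← Finset.sum_filter_of_ne (p := fun s : Square => (s.1, s.2+1) ∈ u)
        (fun s _ hne => ((hBsupp _ hne).2 : (s.1, (s.2+1:ℤ)) ∈ u)),
      ← Finset.sum_filter_of_ne (p := fun s : Square => (s.1, s.2-1) ∈ u)
        (f := B) (fun s _ hne => by
          have := (hBsupp _ hne).1; exact this)]
    refine Finset.sum_nbij' (fun s => (s.1, (s.2+1 : ℤ))) (fun s => (s.1, (s.2-1 : ℤ)))
      ?_ ?_ ?_ ?_ ?_
    · intro s hs
      rw [Finset.mem_filter] at hs ⊢
      refine ⟨hs.2, ?_⟩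
      simpa using hs.1
    · intro s hs
      rw [Finset.mem_filter] at hs ⊢
      refine ⟨hs.2, ?_⟩
      simpa using hs.1
    · intro s _; simp
    · intro s _; simp
    · intro s _; rfl
  calc ∑ s ∈ u, (dpr φ h u (s.1, s.2) (s.1, s.2+1)
      + dpr φ h u (s.1, s.2+1) (s.1+1, s.2+1)
      + dpr φ h u (s.1+1, s.2+1) (s.1+1, s.2)
      + dpr φ h u (s.1+1, s.2) (s.1, s.2))
      = ∑ s ∈ u, (L s + - B (s.1, s.2+1) + - L (s.1+1, s.2) + B s) := by
        refine Finset.sum_congr rfl fun s _ => ?_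
        rw [htop s, hright s]
    _ = (∑ s ∈ u, L s - ∑ s ∈ u, L (s.1+1, s.2))
        + (∑ s ∈ u, B s - ∑ s ∈ u, B (s.1, s.2+1)) := by
        rw [Finset.sum_add_distrib, Finset.sum_add_distrib, Finset.sum_add_distrib,
          Finset.sum_neg_distrib, Finset.sum_neg_distrib]
        abel
    _ = 0 := by rw [claimL, claimB]; abel
end

section
/- Let R be a simply connected region and α an order-n ribbon tiling of R. Then for any two distinct tiles t₁, t₂ of α whose union t₁ ∪ t₂ is connected, the union t₁ ∪ t₂ is simply connected. -/
namespace RibbonAux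

/-- The per-move weight used in `sqWinding`. -/
def F (p : Square) (ab : Square × Square) : ℤ :=
  if ab.1.2 = ab.2.2 ∧ p.2 < ab.1.2 ∧ ab.1.1 = p.1 + 1 ∧ ab.2.1 = p.1 then (1 : ℤ)
  else if ab.1.2 = ab.2.2 ∧ p.2 < ab.1.2 ∧ ab.1.1 = p.1 ∧ ab.2.1 = p.1 + 1 then (-1 : ℤ)
  else 0

lemma sqWinding_eq (p : Square) (L : List Square) :
    sqWinding p L = ((L.zip L.tail).map (F p)).sum := rfl

lemma telescope (φ : Square → ℤ) :
    ∀ L : List Square, ((L.zip L.tail).map (fun ab => φ ab.1 - φ ab.2)).sum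
      = (L.head?.map φ).getD 0 - (L.getLast?.map φ).getD 0
  | [] => by simp
  | [a] => by simp
  | a :: b :: l => by
      have ih := telescope φ (b :: l)
      simp only [List.tail_cons, List.zip_cons_cons, List.map_cons, List.sum_cons,
        List.getLast?_cons_cons, List.head?_cons, Option.map_some, Option.getD_some] at ih ⊢
      omega

lemma chain'_zip {R : Square → Square → Prop} :
    ∀ {L : List Square}, L.Chain' R → ∀ ab ∈ L.zip L.tail, R ab.1 ab.2
  | [], _, ab, h => by simp at h
  | [a], _, ab, h => by simp at h
  | a :: b :: l, hch, ab, h => by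
      replace hch := List.isChain_cons_cons.mp hch
      simp only [List.tail_cons, List.zip_cons_cons, List.mem_cons] at h
      rcases h with rfl | h
      · exact hch.1
      · exact chain'_zip hch.2 ab h

lemma sum_map_add (f g : Square × Square → ℤ) :
    ∀ l : List (Square × Square),
      (l.map (fun x => f x + g x)).sum = (l.map f).sum + (l.map g).sum
  | [] => by simp
  | a :: l => by
      simp only [List.map_cons, List.sum_cons, sum_map_add f g l]; ring

lemma winding_eq_up (L : List Square) (p : Square)
    (hq : ((p.1, p.2 + 1) : Square) ∉ L) :
    sqWinding p L = sqWinding (p.1, p.2 + 1) L := by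
  rw [sqWinding_eq, sqWinding_eq]
  congr 1
  apply List.map_congr_left
  intro ab hab
  obtain ⟨a, b⟩ := ab
  obtain ⟨ha, hb⟩ := List.of_mem_zip hab
  have hb' : b ∈ L := List.mem_of_mem_tail hb
  have ha2 : ¬(a.1 = p.1 ∧ a.2 = p.2 + 1) := by
    rintro ⟨e1, e2⟩; exact hq (by rw [show ((p.1, p.2+1) : Square) = a from by
      rw [Prod.ext_iff]; exact ⟨e1.symm, e2.symm⟩]; exact ha)
  have hb2 : ¬(b.1 = p.1 ∧ b.2 = p.2 + 1) := by
    rintro ⟨e1, e2⟩; exact hq (by rw [show ((p.1, p.2+1) : Square) = b from by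
      rw [Prod.ext_iff]; exact ⟨e1.symm, e2.symm⟩]; exact hb')
  simp only [F]
  split_ifs <;> omega

/-- potential for the horizontal comparison -/
def χ (p : Square) (s : Square) : ℤ := if s.1 = p.1 + 1 ∧ p.2 < s.2 then 1 else 0

set_option maxHeartbeats 2000000 in
lemma winding_eq_right (L : List Square) (hch : L.Chain' SqAdj)
    (hcl : L.head? = L.getLast?) (p : Square)
    (hq : ((p.1 + 1, p.2) : Square) ∉ L) :
    sqWinding p L = sqWinding (p.1 + 1, p.2) L := by
  rw [sqWinding_eq, sqWinding_eq]
  have hpt : ∀ ab ∈ L.zip L.tail,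
      F p ab = F (p.1 + 1, p.2) ab + (χ p ab.1 - χ p ab.2) := by
    intro ab hab
    obtain ⟨a, b⟩ := ab
    have hadj : SqAdj a b := chain'_zip hch (a, b) hab
    obtain ⟨ha, hb⟩ := List.of_mem_zip hab
    have hb' : b ∈ L := List.mem_of_mem_tail hb
    have ha2 : ¬(a.1 = p.1 + 1 ∧ a.2 = p.2) := by
      rintro ⟨e1, e2⟩; exact hq (by rw [show ((p.1+1, p.2) : Square) = a from by
        rw [Prod.ext_iff]; exact ⟨e1.symm, e2.symm⟩]; exact ha)
    have hb2 : ¬(b.1 = p.1 + 1 ∧ b.2 = p.2) := by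
      rintro ⟨e1, e2⟩; exact hq (by rw [show ((p.1+1, p.2) : Square) = b from by
        rw [Prod.ext_iff]; exact ⟨e1.symm, e2.symm⟩]; exact hb')
    simp only [SqAdj] at hadj
    simp only [F, χ]
    split_ifs <;> omega
  rw [List.map_congr_left hpt, sum_map_add]
  have := telescope (χ p) L
  rw [hcl, sub_self] at this
  rw [this, add_zero]

lemma winding_zero_high (L : List Square) (p : Square) (h : ∀ s ∈ L, s.2 ≤ p.2) :
    sqWinding p L = 0 := by
  rw [sqWinding_eq]
  apply List.sum_eq_zero
  intro x hx
  obtain ⟨ab, hab, rfl⟩ := List.mem_map.mp hx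
  obtain ⟨a, b⟩ := ab
  obtain ⟨ha, hb⟩ := List.of_mem_zip hab
  have := h a ha
  simp only [F]
  split_ifs <;> omega

/-- potential for the "loop entirely above p" lemma -/
def ψ (p : Square) (s : Square) : ℤ := if s.1 ≤ p.1 then -1 else 0

lemma winding_zero_low (L : List Square) (hch : L.Chain' SqAdj)
    (hcl : L.head? = L.getLast?) (p : Square) (h : ∀ s ∈ L, p.2 < s.2) :
    sqWinding p L = 0 := by
  rw [sqWinding_eq]
  have hpt : ∀ ab ∈ L.zip L.tail, F p ab = ψ p ab.1 - ψ p ab.2 := by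
    intro ab hab
    obtain ⟨a, b⟩ := ab
    have hadj : SqAdj a b := chain'_zip hch (a, b) hab
    obtain ⟨ha, hb⟩ := List.of_mem_zip hab
    have hb' : b ∈ L := List.mem_of_mem_tail hb
    have h1 := h a ha
    have h2 := h b hb'
    simp only [SqAdj] at hadj
    simp only [F, ψ]
    split_ifs <;> omega
  rw [List.map_congr_left hpt, telescope, hcl, sub_self]

lemma winding_eq_adj (L : List Square) (hch : L.Chain' SqAdj)
    (hcl : L.head? = L.getLast?) {a b : Square}
    (hadj : SqAdj a b) (ha : a ∉ L) (hb : b ∉ L) :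
    sqWinding a L = sqWinding b L := by
  rcases hadj with ⟨e1, e2 | e2⟩ | ⟨e1, e2 | e2⟩
  · -- a.1 = b.1, a.2 = b.2 + 1 : a is up-neighbor of b
    have e : a = ((b.1, b.2 + 1) : Square) := by rw [Prod.ext_iff]; exact ⟨e1, e2⟩
    rw [e]; exact (winding_eq_up L b (by rw [← e]; exact ha)).symm
  · have e : b = ((a.1, a.2 + 1) : Square) := by
      rw [Prod.ext_iff]; exact ⟨e1.symm, e2.symm⟩
    rw [e]; exact winding_eq_up L a (by rw [← e]; exact hb)
  · have e : a = ((b.1 + 1, b.2) : Square) := by rw [Prod.ext_iff]; exact ⟨e2, e1⟩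
    rw [e]; exact (winding_eq_right L hch hcl b (by rw [← e]; exact ha)).symm
  · have e : b = ((a.1 + 1, a.2) : Square) := by
      rw [Prod.ext_iff]; exact ⟨e2.symm, e1.symm⟩
    rw [e]; exact winding_eq_right L hch hcl a (by rw [← e]; exact hb)

lemma winding_const_on (L : List Square) (hch : L.Chain' SqAdj)
    (hcl : L.head? = L.getLast?) {S : Set Square}
    (hS : ∀ s ∈ S, s ∉ L) {a b : Square}
    (hpath : Relation.ReflTransGen (fun x y => x ∈ S ∧ y ∈ S ∧ SqAdj x y) a b) :
    sqWinding a L = sqWinding b L := by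
  induction hpath with
  | refl => rfl
  | tail h₁ h₂ ih =>
      exact ih.trans (winding_eq_adj L hch hcl h₂.2.2 (hS _ h₂.1) (hS _ h₂.2.1))

lemma le_foldr_max : ∀ (l : List ℤ) (x : ℤ), x ∈ l → x ≤ l.foldr max 0
  | a :: l, x, hx => by
      rcases List.mem_cons.mp hx with rfl | hx
      · exact le_max_left _ _
      · exact (le_foldr_max l x hx).trans (le_max_right _ _)
  | [], x, hx => by simp at hx

lemma foldr_min_le : ∀ (l : List ℤ) (x : ℤ), x ∈ l → l.foldr min 0 ≤ x
  | a :: l, x, hx => by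
      rcases List.mem_cons.mp hx with rfl | hx
      · exact min_le_left _ _
      · exact (min_le_right _ _).trans (foldr_min_le l x hx)
  | [], x, hx => by simp at hx


lemma exists_loop_above (L : List Square) (p : Square) (hw : sqWinding p L ≠ 0) :
    ∃ y, p.2 < y ∧ ((p.1, y) : Square) ∈ L := by
  by_contra hcon
  push_neg at hcon
  set B := (L.map Prod.snd).foldr max 0 with hB
  have hBle : ∀ s ∈ L, s.2 ≤ B := fun s hs => le_foldr_max _ _ (List.mem_map_of_mem hs)
  have key : ∀ k : ℕ, sqWinding (p.1, p.2 + k) L ≠ 0 := by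
    intro k
    induction k with
    | zero => simpa using hw
    | succ k ih =>
        have hnot : ((p.1, p.2 + (k : ℤ) + 1) : Square) ∉ L := hcon _ (by omega)
        have heq := winding_eq_up L (p.1, p.2 + (k : ℤ)) hnot
        have : sqWinding ((p.1, p.2 + (k : ℤ) + 1) : Square) L ≠ 0 := by
          rw [← heq]; exact ih
        have e : ((p.1, p.2 + ((k : ℕ) + 1 : ℕ)) : Square)
            = ((p.1, p.2 + (k : ℤ) + 1) : Square) := by
          rw [Prod.ext_iff]; constructor
          · rfl
          · push_cast; ring
        rw [e]; exact this
  have hk : sqWinding (p.1, p.2 + ((B + 1 - p.2).toNat : ℕ)) L = 0 := by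
    apply winding_zero_high
    intro s hs
    have h1 := hBle s hs
    have h2 := Int.self_le_toNat (B + 1 - p.2)
    simp only
    omega
  exact key _ hk

lemma exists_loop_below (L : List Square) (hch : L.Chain' SqAdj)
    (hcl : L.head? = L.getLast?) (p : Square) (hpL : p ∉ L)
    (hw : sqWinding p L ≠ 0) :
    ∃ y, y < p.2 ∧ ((p.1, y) : Square) ∈ L := by
  by_contra hcon
  push_neg at hcon
  set B := (L.map Prod.snd).foldr min 0 with hB
  have hBle : ∀ s ∈ L, B ≤ s.2 := fun s hs => foldr_min_le _ _ (List.mem_map_of_mem hs)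
  have key : ∀ k : ℕ, ((p.1, p.2 - k) : Square) ∉ L ∧ sqWinding (p.1, p.2 - k) L ≠ 0 := by
    intro k
    induction k with
    | zero =>
        constructor
        · simpa using hpL
        · simpa using hw
    | succ k ih =>
        have hnot : ((p.1, p.2 - ((k : ℕ) + 1 : ℕ)) : Square) ∉ L := by
          apply hcon
          push_cast; omega
        refine ⟨hnot, ?_⟩
        have e : ((p.1, (p.2 - ((k : ℕ) + 1 : ℕ)) + 1) : Square)
            = ((p.1, p.2 - (k : ℤ)) : Square) := by
          rw [Prod.ext_iff]; constructor
          · rfl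
          · push_cast; ring
        have heq := winding_eq_up L (p.1, p.2 - ((k : ℕ) + 1 : ℕ)) (by rw [e]; exact ih.1)
        rw [heq, e]
        exact ih.2
  have hk : sqWinding (p.1, p.2 - ((p.2 - B + 1).toNat : ℕ)) L = 0 := by
    apply winding_zero_low L hch hcl
    intro s hs
    have h1 := hBle s hs
    have h2 := Int.self_le_toNat (p.2 - B + 1)
    simp only
    omega
  exact (key _).2 hk

lemma ribbon_level_inj {n : ℕ} (hn : 0 < n) {t : Finset Square} (ht : IsRibbonTile n t) :
    ∀ s ∈ t, ∀ s' ∈ t, s.1 + s.2 = s'.1 + s'.2 → s = s' := by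
  intro s hs s' hs' h
  obtain ⟨-, -, hcol⟩ := ht
  have hne : (n : ℤ) ≠ 0 := by exact_mod_cast hn.ne'
  have h0 : (0 : ℤ) ≤ (s.1 + s.2) % n := Int.emod_nonneg _ hne
  have h1 : (s.1 + s.2) % n < n := Int.emod_lt_of_pos _ (by exact_mod_cast hn)
  obtain ⟨u, hu, huniq⟩ := hcol _ h0 h1
  have e1 := huniq s ⟨hs, rfl⟩
  have e2 := huniq s' ⟨hs', by rw [← h]⟩
  rw [e1, e2]

lemma exists_level_between {t : Finset Square} (hconn : ConnOn ↑t)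
    {a b : Square} (ha : a ∈ t) (hb : b ∈ t) (ν : ℤ)
    (h1 : a.1 + a.2 ≤ ν) (h2 : ν ≤ b.1 + b.2) : ∃ s ∈ t, s.1 + s.2 = ν := by
  have key : ∀ {c : Square},
      Relation.ReflTransGen (fun x y => x ∈ (↑t : Set Square) ∧ y ∈ (↑t : Set Square) ∧ SqAdj x y) a c →
      ν ≤ c.1 + c.2 → ∃ s ∈ t, s.1 + s.2 = ν := by
    intro c hpath
    induction hpath with
    | refl => intro h2'; exact ⟨a, ha, by omega⟩
    | @tail y c hxy hyc ih =>
        intro h2'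
        rcases le_or_gt ν (y.1 + y.2) with hν | hν
        · exact ih hν
        · refine ⟨c, by exact_mod_cast hyc.2.1, ?_⟩
          rcases hyc.2.2 with ⟨e1, e2 | e2⟩ | ⟨e1, e2 | e2⟩ <;> omega
  exact key (hconn a ha b hb) h2

lemma card_ge_of_levels {t : Finset Square} (hconn : ConnOn ↑t)
    {a b : Square} (ha : a ∈ t) (hb : b ∈ t) :
    b.1 + b.2 - (a.1 + a.2) + 1 ≤ (t.card : ℤ) := by
  rcases le_or_gt (a.1 + a.2) (b.1 + b.2) with hle | hlt
  · have hsub : Finset.Icc (a.1 + a.2) (b.1 + b.2) ⊆ t.image (fun s => s.1 + s.2) := by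
      intro ν hν
      rw [Finset.mem_Icc] at hν
      obtain ⟨s, hs, hsν⟩ := exists_level_between hconn ha hb ν hν.1 hν.2
      exact Finset.mem_image.mpr ⟨s, hs, hsν⟩
    have hc1 := Finset.card_le_card hsub
    have hc2 := Finset.card_image_le (s := t) (f := fun s : Square => s.1 + s.2)
    rw [Int.card_Icc] at hc1
    have h3 := Int.toNat_of_nonneg (show (0:ℤ) ≤ b.1 + b.2 + 1 - (a.1 + a.2) by omega)
    omega
  · have : 0 < t.card := Finset.card_pos.mpr ⟨a, ha⟩
    omega

lemma exists_span {n : ℕ} {t : Finset Square} (hcard : t.card = n) (hn : 0 < n)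
    (hinj : ∀ s ∈ t, ∀ s' ∈ t, s.1 + s.2 = s'.1 + s'.2 → s = s') :
    ∃ a ∈ t, ∃ b ∈ t, (a.1 + a.2) + (n - 1 : ℤ) ≤ b.1 + b.2 := by
  have htne : t.Nonempty := Finset.card_pos.mp (by omega)
  set img := t.image (fun s : Square => s.1 + s.2) with himg
  have hne : img.Nonempty := htne.image _
  have hcardimg : img.card = n := by
    rw [himg, Finset.card_image_of_injOn, hcard]
    intro s hs s' hs' h
    exact hinj s (by exact_mod_cast hs) s' (by exact_mod_cast hs') h
  have hsub : img ⊆ Finset.Icc (img.min' hne) (img.max' hne) := by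
    intro x hx
    exact Finset.mem_Icc.mpr ⟨Finset.min'_le _ _ hx, Finset.le_max' _ _ hx⟩
  have hc := Finset.card_le_card hsub
  rw [Int.card_Icc] at hc
  obtain ⟨a, ha, hla⟩ := Finset.mem_image.mp (img.min'_mem hne)
  obtain ⟨b, hb, hlb⟩ := Finset.mem_image.mp (img.max'_mem hne)
  have h3 := Int.self_le_toNat (img.max' hne + 1 - img.min' hne)
  exact ⟨a, ha, b, hb, by omega⟩

end RibbonAux

open RibbonAux

/-- In an order-`n` ribbon tiling of a simply connected
region, the union of any two distinct tiles whose union is connected is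
simply connected. -/
theorem ribbon_tiling_pair_union_simply_connected
    (n : ℕ) (hn : 2 ≤ n) (R : Finset Square)
    (hreg : IsRegion R) (hsc : SimplyConnectedSq ↑R)
    (α : Finset (Finset Square)) (hα : IsRibbonTiling n R α)
    (t₁ t₂ : Finset Square) (h₁ : t₁ ∈ α) (h₂ : t₂ ∈ α) (hne : t₁ ≠ t₂)
    (hconn : ConnOn ↑(t₁ ∪ t₂)) :
    SimplyConnectedSq ↑(t₁ ∪ t₂) := by
  intro p hp L hL
  obtain ⟨hLne, hLmem, hch, hcl⟩ := hL
  by_contra hw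
  obtain ⟨htiles, hsub, hcover⟩ := hα
  have hn0 : 0 < n := by omega
  have hLC : ∀ s ∈ L, s ∈ t₁ ∪ t₂ := fun s hs => by
    have := hLmem s hs; simpa using this
  have hLR : ∀ s ∈ L, s ∈ R := fun s hs => by
    rcases Finset.mem_union.mp (hLC s hs) with h | h
    · exact hsub t₁ h₁ h
    · exact hsub t₂ h₂ h
  have hpC : p ∉ t₁ ∪ t₂ := by simpa using hp
  -- p must lie in R, else simple connectivity of R is violated
  have hpR : p ∈ R := by
    by_contra hpR
    exact hw (hsc p (by simpa using hpR) L
      ⟨hLne, fun s hs => by simpa using hLR s hs, hch, hcl⟩)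
  obtain ⟨t₃, ⟨ht₃α, hpt₃⟩, -⟩ := hcover p hpR
  -- t₃ is disjoint from L
  have ht₃ne₁ : t₃ ≠ t₁ := fun h => hpC (Finset.mem_union_left _ (h ▸ hpt₃))
  have ht₃ne₂ : t₃ ≠ t₂ := fun h => hpC (Finset.mem_union_right _ (h ▸ hpt₃))
  have hdisj : ∀ s ∈ t₃, s ∉ L := by
    intro s hs hsL
    rcases Finset.mem_union.mp (hLC s hsL) with h | h
    · obtain ⟨u, -, huniq⟩ := hcover s (hsub t₁ h₁ h)
      exact ht₃ne₁ ((huniq t₃ ⟨ht₃α, hs⟩).trans (huniq t₁ ⟨h₁, h⟩).symm)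
    · obtain ⟨u, -, huniq⟩ := hcover s (hsub t₂ h₂ h)
      exact ht₃ne₂ ((huniq t₃ ⟨ht₃α, hs⟩).trans (huniq t₂ ⟨h₂, h⟩).symm)
  -- winding is constant on t₃
  have hconst : ∀ s ∈ t₃, sqWinding s L = sqWinding p L := by
    intro s hs
    exact (winding_const_on L hch hcl (S := (↑t₃ : Set Square))
      (fun x hx => hdisj x (by exact_mod_cast hx))
      ((htiles t₃ ht₃α).1 p (by exact_mod_cast hpt₃) s (by exact_mod_cast hs))).symm
  -- the levels of squares with nonzero winding are bounded above
  have hbdd : ∃ B : ℤ, ∀ h : Square, sqWinding h L ≠ 0 → h.1 + h.2 ≤ B := by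
    refine ⟨(L.map (fun s : Square => s.1 + s.2)).foldr max 0, ?_⟩
    intro h hwh
    obtain ⟨y, hy, hyL⟩ := exists_loop_above L h hwh
    have hle := le_foldr_max _ _ (List.mem_map_of_mem (f := fun s : Square => s.1 + s.2) hyL)
    simp only at hle
    omega
  obtain ⟨B, hB⟩ := hbdd
  -- take a square with nonzero winding of greatest level ℓ
  obtain ⟨ℓ, ⟨s₀, hs₀w, hs₀ℓ⟩, hmax⟩ :=
    Int.exists_greatest_of_bdd
      (P := fun ℓ => ∃ h : Square, sqWinding h L ≠ 0 ∧ h.1 + h.2 = ℓ)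
      ⟨B, fun z ⟨h, hh, he⟩ => he ▸ hB h hh⟩ ⟨p.1 + p.2, p, hw, rfl⟩
  -- its up- and right-neighbors are on the loop
  have hu : ((s₀.1, s₀.2 + 1) : Square) ∈ L := by
    by_contra huL
    have heq := winding_eq_up L s₀ huL
    have hw' : sqWinding ((s₀.1, s₀.2 + 1) : Square) L ≠ 0 := by rw [← heq]; exact hs₀w
    have := hmax _ ⟨_, hw', rfl⟩
    simp only at this
    omega
  have hr : ((s₀.1 + 1, s₀.2) : Square) ∈ L := by
    by_contra hrL
    have heq := winding_eq_right L hch hcl s₀ hrL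
    have hw' : sqWinding ((s₀.1 + 1, s₀.2) : Square) L ≠ 0 := by rw [← heq]; exact hs₀w
    have := hmax _ ⟨_, hw', rfl⟩
    simp only at this
    omega
  have hune : ((s₀.1, s₀.2 + 1) : Square) ≠ ((s₀.1 + 1, s₀.2) : Square) := by
    simp only [ne_eq, Prod.ext_iff, not_and]
    intro h; omega
  -- both t₁ and t₂ have a square at level ℓ + 1
  have hlevinj₁ := ribbon_level_inj hn0 (htiles t₁ h₁)
  have hlevinj₂ := ribbon_level_inj hn0 (htiles t₂ h₂)
  have htop : (∃ x ∈ t₁, x.1 + x.2 = ℓ + 1) ∧ (∃ x ∈ t₂, x.1 + x.2 = ℓ + 1) := by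
    have hul := hLC _ hu
    have hrl := hLC _ hr
    rcases Finset.mem_union.mp hul with hu1 | hu2 <;>
      rcases Finset.mem_union.mp hrl with hr1 | hr2
    · exact absurd (hlevinj₁ _ hu1 _ hr1 (by simp only; omega)) hune
    · exact ⟨⟨_, hu1, by simp only; omega⟩, ⟨_, hr2, by simp only; omega⟩⟩
    · exact ⟨⟨_, hr1, by simp only; omega⟩, ⟨_, hu2, by simp only; omega⟩⟩
    · exact absurd (hlevinj₂ _ hu2 _ hr2 (by simp only; omega)) hune
  -- t₃ spans n levels, all of them at most ℓ
  have hinj₃ := ribbon_level_inj hn0 (htiles t₃ ht₃α)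
  obtain ⟨a, hat, b, hbt, hspan⟩ := exists_span (htiles t₃ ht₃α).2.1 hn0 hinj₃
  have hbℓ : b.1 + b.2 ≤ ℓ := hmax _ ⟨b, by rw [hconst b hbt]; exact hw, rfl⟩
  -- from the bottom square of t₃, walk down to the loop
  obtain ⟨y, hy, hyL⟩ := exists_loop_below L hch hcl a (hdisj a hat)
    (by rw [hconst a hat]; exact hw)
  -- the tile containing (a.1, y) has squares at levels (a.1+y) and ℓ+1: too many
  rcases Finset.mem_union.mp (hLC _ hyL) with hβ | hβ
  · obtain ⟨x, hx, hxℓ⟩ := htop.1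
    have hc := card_ge_of_levels (htiles t₁ h₁).1 hβ hx
    rw [(htiles t₁ h₁).2.1] at hc
    simp only at hc
    omega
  · obtain ⟨x, hx, hxℓ⟩ := htop.2
    have hc := card_ge_of_levels (htiles t₂ h₂).1 hβ hx
    rw [(htiles t₂ h₂).2.1] at hc
    simp only at hc
    omega
end

section
/- If t₁ and t₂ are disjoint order-n ribbon tiles, then t₁ ≺ t₂ and t₂ ≺ t₁ cannot both hold. -/
lemma sq_eq {u v : Square} (h1 : u.1 = v.1) (h2 : u.1 + u.2 = v.1 + v.2) : u = v :=
  Prod.ext h1 (by omega)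

lemma adj_level {a b : Square} (h : SqAdj a b) :
    b.1 + b.2 = a.1 + a.2 + 1 ∨ b.1 + b.2 = a.1 + a.2 - 1 := by
  rcases h with ⟨h1, h2 | h2⟩ | ⟨h1, h2 | h2⟩ <;> omega

lemma rib_inj {n : ℕ} (hn : 0 < n) {t : Finset Square} (h : IsRibbonTile n t)
    {p q : Square} (hp : p ∈ t) (hq : q ∈ t) (hl : p.1 + p.2 = q.1 + q.2) : p = q := by
  obtain ⟨w, _, huniq⟩ := h.2.2 ((p.1 + p.2) % n)
    (Int.emod_nonneg _ (by exact_mod_cast hn.ne'))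
    (Int.emod_lt_of_pos _ (by exact_mod_cast hn))
  have h1 := huniq p ⟨hp, rfl⟩
  have h2 := huniq q ⟨hq, by rw [← hl]⟩
  rw [h1, h2]

lemma conn_ivt {t : Finset Square} (hc : ConnOn ↑t) {p q : Square}
    (hp : p ∈ t) (hq : q ∈ t) :
    ∀ ℓ : ℤ, p.1 + p.2 ≤ ℓ → ℓ ≤ q.1 + q.2 → ∃ u ∈ t, u.1 + u.2 = ℓ := by
  have hpath := hc p (Finset.mem_coe.mpr hp) q (Finset.mem_coe.mpr hq)
  clear hq
  induction hpath with
  | refl => exact fun ℓ h1 h2 => ⟨p, hp, by omega⟩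
  | @tail b c hpb hbc ih =>
      intro ℓ h1 h2
      obtain ⟨hb, hcmem, hadj⟩ := hbc
      rcases adj_level hadj with h | h
      · by_cases hcase : ℓ ≤ b.1 + b.2
        · exact ih ℓ h1 hcase
        · exact ⟨c, Finset.mem_coe.mp hcmem, by omega⟩
      · exact ih ℓ h1 (by omega)

lemma conn_cross {t : Finset Square} (hc : ConnOn ↑t) {p q : Square}
    (hp : p ∈ t) (hq : q ∈ t) :
    ∀ ℓ : ℤ, p.1 + p.2 ≤ ℓ → ℓ + 1 ≤ q.1 + q.2 →
      ∃ a ∈ t, ∃ b ∈ t, a.1 + a.2 = ℓ ∧ b.1 + b.2 = ℓ + 1 ∧ SqAdj a b := by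
  have hpath := hc p (Finset.mem_coe.mpr hp) q (Finset.mem_coe.mpr hq)
  clear hq
  induction hpath with
  | refl => exact fun ℓ h1 h2 => absurd h2 (by omega)
  | @tail b c hpb hbc ih =>
      intro ℓ h1 h2
      obtain ⟨hb, hcmem, hadj⟩ := hbc
      by_cases hcase : ℓ + 1 ≤ b.1 + b.2
      · exact ih ℓ h1 hcase
      · rcases adj_level hadj with h | h
        · exact ⟨b, Finset.mem_coe.mp hb, c, Finset.mem_coe.mp hcmem, by omega, by omega, hadj⟩
        · exact absurd h2 (by omega)

lemma rib_step {n : ℕ} (hn : 0 < n) {t : Finset Square} (h : IsRibbonTile n t)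
    {p q : Square} (hp : p ∈ t) (hq : q ∈ t) (hl : q.1 + q.2 = p.1 + p.2 + 1) :
    q.1 = p.1 ∨ q.1 = p.1 + 1 := by
  obtain ⟨a, ha, b, hb, ha2, hb2, hadj⟩ := conn_cross h.1 hp hq (p.1 + p.2) le_rfl (by omega)
  have hap : a = p := rib_inj hn h ha hp (by omega)
  have hbq : b = q := rib_inj hn h hb hq (by omega)
  subst hap; subst hbq
  rcases hadj with ⟨h1, h2 | h2⟩ | ⟨h1, h2 | h2⟩ <;> omega

lemma prop_up {n : ℕ} (hn : 0 < n) {t₁ t₂ : Finset Square}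
    (h1 : IsRibbonTile n t₁) (h2 : IsRibbonTile n t₂)
    (hd : ∀ s, s ∈ t₁ → s ∉ t₂) :
    ∀ d : ℕ, ∀ u v u' v' : Square, u ∈ t₁ → v ∈ t₂ → u' ∈ t₁ → v' ∈ t₂ →
      u.1 + u.2 = v.1 + v.2 → u'.1 + u'.2 = u.1 + u.2 + d → v'.1 + v'.2 = u.1 + u.2 + d →
      u.1 < v.1 → u'.1 < v'.1 := by
  intro d
  induction d with
  | zero =>
      intro u v u' v' hu hv hu' hv' hlvl hl1 hl2 hx
      have e1 : u' = u := rib_inj hn h1 hu' hu (by omega)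
      have e2 : v' = v := rib_inj hn h2 hv' hv (by omega)
      rw [e1, e2]; exact hx
  | succ d ih =>
      intro u v u' v' hu hv hu' hv' hlvl hl1 hl2 hx
      obtain ⟨w, hw, hwl⟩ := conn_ivt h1.1 hu hu' (u.1 + u.2 + d) (by omega) (by omega)
      obtain ⟨z, hz, hzl⟩ := conn_ivt h2.1 hv hv' (u.1 + u.2 + d) (by omega) (by omega)
      have hwz : w.1 < z.1 := ih u v w z hu hv hw hz hlvl (by omega) (by omega) hx
      have s1 := rib_step hn h1 hw hu' (by omega)
      have s2 := rib_step hn h2 hz hv' (by omega)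
      have hxle : u'.1 ≤ v'.1 := by rcases s1 with e | e <;> rcases s2 with f | f <;> omega
      rcases lt_or_eq_of_le hxle with h | h
      · exact h
      · exact absurd (by rw [sq_eq h (by omega)]; exact hv') (hd u' hu')

lemma prop_down {n : ℕ} (hn : 0 < n) {t₁ t₂ : Finset Square}
    (h1 : IsRibbonTile n t₁) (h2 : IsRibbonTile n t₂)
    (hd : ∀ s, s ∈ t₁ → s ∉ t₂) :
    ∀ d : ℕ, ∀ u v u' v' : Square, u ∈ t₁ → v ∈ t₂ → u' ∈ t₁ → v' ∈ t₂ →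
      u.1 + u.2 = v.1 + v.2 → u'.1 + u'.2 = u.1 + u.2 - d → v'.1 + v'.2 = u.1 + u.2 - d →
      u.1 < v.1 → u'.1 < v'.1 := by
  intro d
  induction d with
  | zero =>
      intro u v u' v' hu hv hu' hv' hlvl hl1 hl2 hx
      have e1 : u' = u := rib_inj hn h1 hu' hu (by omega)
      have e2 : v' = v := rib_inj hn h2 hv' hv (by omega)
      rw [e1, e2]; exact hx
  | succ d ih =>
      intro u v u' v' hu hv hu' hv' hlvl hl1 hl2 hx
      obtain ⟨w, hw, hwl⟩ := conn_ivt h1.1 hu' hu (u.1 + u.2 - d) (by omega) (by omega)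
      obtain ⟨z, hz, hzl⟩ := conn_ivt h2.1 hv' hv (u.1 + u.2 - d) (by omega) (by omega)
      have hwz : w.1 < z.1 := ih u v w z hu hv hw hz hlvl (by omega) (by omega) hx
      have s1 := rib_step hn h1 hu' hw (by omega)
      have s2 := rib_step hn h2 hv' hz (by omega)
      have hxle : u'.1 ≤ v'.1 := by rcases s1 with e | e <;> rcases s2 with f | f <;> omega
      rcases lt_or_eq_of_le hxle with h | h
      · exact h
      · exact absurd (by rw [sq_eq h (by omega)]; exact hv') (hd u' hu')

lemma exists_common {n : ℕ} (hn : 0 < n) {A B : Finset Square}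
    (hA : IsRibbonTile n A) (hB : IsRibbonTile n B)
    (hd : ∀ s, s ∈ A → s ∉ B) (hAB : TilePrec A B) (hBA : TilePrec B A) :
    ∃ u ∈ A, ∃ v ∈ B, u.1 + u.2 = v.1 + v.2 ∧ u.1 < v.1 := by
  obtain ⟨s₁, hs₁, s₂, hs₂, hprec⟩ := hAB
  unfold sqPrec at hprec
  rcases hprec with ⟨hl, hx⟩ | ⟨habs, hx, hy⟩
  · exact ⟨s₁, hs₁, s₂, hs₂, hl, hx⟩
  rcases (abs_eq (by norm_num : (0:ℤ) ≤ 1)).mp habs with hl | hl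
  · -- s₂ is one level below s₁
    by_cases hA' : ∃ u ∈ A, u.1 + u.2 = s₂.1 + s₂.2
    · obtain ⟨u, hu, hul⟩ := hA'
      have step := rib_step hn hA hu hs₁ (by omega)
      have hlt : u.1 < s₂.1 := by
        rcases lt_or_eq_of_le (show u.1 ≤ s₂.1 by omega) with h | h
        · exact h
        · exact absurd (by rw [sq_eq h (by omega)]; exact hs₂) (hd u hu)
      exact ⟨u, hu, s₂, hs₂, by omega, hlt⟩
    by_cases hB' : ∃ v ∈ B, v.1 + v.2 = s₁.1 + s₁.2
    · obtain ⟨v, hv, hvl⟩ := hB'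
      have step := rib_step hn hB hs₂ hv (by omega)
      have hlt : s₁.1 < v.1 := by
        rcases lt_or_eq_of_le (show s₁.1 ≤ v.1 by omega) with h | h
        · exact h
        · exact absurd (by rw [sq_eq h (by omega)]; exact hv) (hd s₁ hs₁)
      exact ⟨s₁, hs₁, v, hv, by omega, hlt⟩
    exfalso
    push_neg at hA' hB'
    have hAbound : ∀ w ∈ A, s₁.1 + s₁.2 ≤ w.1 + w.2 := by
      intro w hw
      by_contra hlt
      push_neg at hlt
      obtain ⟨u, hu, hul⟩ := conn_ivt hA.1 hw hs₁ (s₂.1 + s₂.2) (by omega) (by omega)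
      exact hA' u hu hul
    have hBbound : ∀ w ∈ B, w.1 + w.2 ≤ s₂.1 + s₂.2 := by
      intro w hw
      by_contra hlt
      push_neg at hlt
      obtain ⟨v, hv, hvl⟩ := conn_ivt hB.1 hs₂ hw (s₁.1 + s₁.2) (by omega) (by omega)
      exact hB' v hv hvl
    obtain ⟨r₂, hr₂, r₁, hr₁, hprec'⟩ := hBA
    have b1 := hAbound r₁ hr₁
    have b2 := hBbound r₂ hr₂
    unfold sqPrec at hprec'
    rcases hprec' with ⟨hl', hx'⟩ | ⟨habs', hx', hy'⟩
    · omega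
    rcases (abs_eq (by norm_num : (0:ℤ) ≤ 1)).mp habs' with hl' | hl'
    · omega
    have e1 : r₁ = s₁ := rib_inj hn hA hr₁ hs₁ (by omega)
    have e2 : r₂ = s₂ := rib_inj hn hB hr₂ hs₂ (by omega)
    rw [e1, e2] at hx' hy'
    omega
  · -- s₂ is one level above s₁
    have hx2 : s₁.1 + 1 ≤ s₂.1 := by omega
    by_cases hA' : ∃ u ∈ A, u.1 + u.2 = s₂.1 + s₂.2
    · obtain ⟨u, hu, hul⟩ := hA'
      have step := rib_step hn hA hs₁ hu (by omega)
      have hlt : u.1 < s₂.1 := by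
        rcases lt_or_eq_of_le (show u.1 ≤ s₂.1 by omega) with h | h
        · exact h
        · exact absurd (by rw [sq_eq h (by omega)]; exact hs₂) (hd u hu)
      exact ⟨u, hu, s₂, hs₂, by omega, hlt⟩
    by_cases hB' : ∃ v ∈ B, v.1 + v.2 = s₁.1 + s₁.2
    · obtain ⟨v, hv, hvl⟩ := hB'
      have step := rib_step hn hB hv hs₂ (by omega)
      have hlt : s₁.1 < v.1 := by
        rcases lt_or_eq_of_le (show s₁.1 ≤ v.1 by omega) with h | h
        · exact h
        · exact absurd (by rw [sq_eq h (by omega)]; exact hv) (hd s₁ hs₁)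
      exact ⟨s₁, hs₁, v, hv, by omega, hlt⟩
    exfalso
    push_neg at hA' hB'
    have hAbound : ∀ w ∈ A, w.1 + w.2 ≤ s₁.1 + s₁.2 := by
      intro w hw
      by_contra hlt
      push_neg at hlt
      obtain ⟨u, hu, hul⟩ := conn_ivt hA.1 hs₁ hw (s₂.1 + s₂.2) (by omega) (by omega)
      exact hA' u hu hul
    have hBbound : ∀ w ∈ B, s₂.1 + s₂.2 ≤ w.1 + w.2 := by
      intro w hw
      by_contra hlt
      push_neg at hlt
      obtain ⟨v, hv, hvl⟩ := conn_ivt hB.1 hw hs₂ (s₁.1 + s₁.2) (by omega) (by omega)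
      exact hB' v hv hvl
    obtain ⟨r₂, hr₂, r₁, hr₁, hprec'⟩ := hBA
    have b1 := hAbound r₁ hr₁
    have b2 := hBbound r₂ hr₂
    unfold sqPrec at hprec'
    rcases hprec' with ⟨hl', hx'⟩ | ⟨habs', hx', hy'⟩
    · omega
    rcases (abs_eq (by norm_num : (0:ℤ) ≤ 1)).mp habs' with hl' | hl'
    · have e1 : r₁ = s₁ := rib_inj hn hA hr₁ hs₁ (by omega)
      have e2 : r₂ = s₂ := rib_inj hn hB hr₂ hs₂ (by omega)
      rw [e1, e2] at hx' hy'
      omega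
    · omega

/-- If `t₁` and `t₂` are disjoint order-`n` ribbon tiles,
then `t₁ ≺ t₂` and `t₂ ≺ t₁` cannot both hold. -/
theorem disjoint_ribbon_tiles_not_both_prec
    (n : ℕ) (hn : 2 ≤ n) (t₁ t₂ : Finset Square)
    (h₁ : IsRibbonTile n t₁) (h₂ : IsRibbonTile n t₂)
    (hdisj : Disjoint t₁ t₂) :
    ¬ (TilePrec t₁ t₂ ∧ TilePrec t₂ t₁) := by
  rintro ⟨h12, h21⟩
  have hn0 : 0 < n := by omega
  have hd12 : ∀ s, s ∈ t₁ → s ∉ t₂ := fun s hs => Finset.disjoint_left.mp hdisj hs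
  have hd21 : ∀ s, s ∈ t₂ → s ∉ t₁ := fun s hs => Finset.disjoint_right.mp hdisj hs
  obtain ⟨u, hu, v, hv, hlvl, hx⟩ := exists_common hn0 h₁ h₂ hd12 h12 h21
  obtain ⟨v', hv', u', hu', hlvl', hx'⟩ := exists_common hn0 h₂ h₁ hd21 h21 h12
  rcases le_or_gt (u.1 + u.2) (u'.1 + u'.2) with hle | hlt
  · obtain ⟨d, hdd⟩ : ∃ d : ℕ, u'.1 + u'.2 = u.1 + u.2 + d :=
      ⟨(u'.1 + u'.2 - (u.1 + u.2)).toNat, by omega⟩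
    have := prop_up hn0 h₁ h₂ hd12 d u v u' v' hu hv hu' hv' hlvl hdd (by omega) hx
    omega
  · obtain ⟨d, hdd⟩ : ∃ d : ℕ, u'.1 + u'.2 = u.1 + u.2 - d :=
      ⟨(u.1 + u.2 - (u'.1 + u'.2)).toNat, by omega⟩
    have := prop_down hn0 h₁ h₂ hd12 d u v u' v' hu hv hu' hv' hlvl hdd (by omega) hx
    omega
end
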